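/- Let ω be a radial weight in the class D̂. Then for every analytic self-map φ of the unit disc there exist constants M > 0 and r₀ ∈ (0,1) such that N_{φ,ω*}(z) ≤ M ω*(z) for all r₀ ≤ |z| < 1, where N_{φ,ω*}(z) = Σ_{ζ ∈ φ⁻¹(z)} ω*(ζ). -/

import Mathlib

open MeasureTheory Set Metric
open scoped Classical

/-- The multiplicity of `ζ` as a preimage of `z` under `φ` (the order of the zero of
`φ - z` at `ζ`, and `0` if `φ - z` is not analytic at `ζ` or the order is infinite). -/
noncomputable def multOf (φ : ℂ → ℂ) (z ζ : ℂ) : ℕ :=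
  if h : AnalyticAt ℂ (fun w => φ w - z) ζ then (analyticOrderAt (fun w => φ w - z) ζ).toNat else 0

/-- `ω*(r) = ∫_r^1 ω(s) log(s/r) s ds` (which vanishes for `r = 1`). -/
noncomputable def wstar (ω : ℝ → ℝ) (r : ℝ) : ℝ :=
  ∫ s in Set.Ioo r 1, ω s * Real.log (s / r) * s

/-- The generalized Nevanlinna counting function
`N_{φ,ω*}(z) = Σ_{ζ ∈ φ⁻¹(z)} ω*(|ζ|)`, preimages counted with multiplicity. -/
noncomputable def nev (ω : ℝ → ℝ) (φ : ℂ → ℂ) (z : ℂ) : ℝ :=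
  ∑' ζ : ↥(Metric.ball (0:ℂ) 1 ∩ φ ⁻¹' {z}), (multOf φ z ζ : ℝ) * wstar ω ‖(ζ : ℂ)‖

open Filter
open scoped Topology

noncomputable def AnalyticAt.order {f : ℂ → ℂ} {a : ℂ} (_ : AnalyticAt ℂ f a) : ℕ∞ :=
  analyticOrderAt f a

lemma AnalyticAt.order_eq_nat_iff {f : ℂ → ℂ} {a : ℂ} (hf : AnalyticAt ℂ f a) (n : ℕ) :
    hf.order = n ↔ ∃ g : ℂ → ℂ, AnalyticAt ℂ g a ∧ g a ≠ 0 ∧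
      ∀ᶠ w in 𝓝 a, f w = (w - a) ^ n • g w :=
  hf.analyticOrderAt_eq_natCast

lemma AnalyticAt.order_eq_top_iff {f : ℂ → ℂ} {a : ℂ} (hf : AnalyticAt ℂ f a) :
    hf.order = ⊤ ↔ ∀ᶠ w in 𝓝 a, f w = 0 :=
  analyticOrderAt_eq_top



lemma order_value_zero_of_one_le {f : ℂ → ℂ} {a : ℂ} (hf : AnalyticAt ℂ f a)
    (h : 1 ≤ hf.order) : f a = 0 := by
  by_contra hfa
  have : hf.order = (0:ℕ) := by
    rw [hf.order_eq_nat_iff]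
    exact ⟨f, hf, hfa, by filter_upwards with w; simp⟩
  rw [this] at h
  simp at h

lemma order_unit_mul {f u g : ℂ → ℂ} {a : ℂ} (hf : AnalyticAt ℂ f a) (hu : AnalyticAt ℂ u a)
    (hg : AnalyticAt ℂ g a) (hu0 : u a ≠ 0) (heq : ∀ᶠ w in 𝓝 a, f w = u w * g w) :
    hf.order = hg.order := by
  cases h : hg.order with
  | top =>
    rw [hg.order_eq_top_iff] at h
    rw [hf.order_eq_top_iff]
    filter_upwards [h, heq] with w hw hw2
    rw [hw2, hw, mul_zero]
  | coe n =>
    rw [hg.order_eq_nat_iff] at h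
    obtain ⟨g₀, hg₀, hg₀0, hg₀e⟩ := h
    rw [hf.order_eq_nat_iff]
    exact ⟨fun w => u w * g₀ w, hu.mul hg₀, mul_ne_zero hu0 hg₀0, by
      filter_upwards [heq, hg₀e] with w h1 h2
      rw [h1, h2]; simp [smul_eq_mul]; ring⟩

lemma order_sub_mul {f g : ℂ → ℂ} {a : ℂ} (hf : AnalyticAt ℂ f a)
    (hg : AnalyticAt ℂ g a) (heq : ∀ᶠ w in 𝓝 a, f w = (w - a) * g w) :
    hf.order = hg.order + 1 := by
  cases h : hg.order with
  | top =>
    rw [hg.order_eq_top_iff] at h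
    have : hf.order = ⊤ := by
      rw [hf.order_eq_top_iff]
      filter_upwards [h, heq] with w hw hw2
      rw [hw2, hw, mul_zero]
    rw [this]; rfl
  | coe n =>
    rw [hg.order_eq_nat_iff] at h
    obtain ⟨g₀, hg₀, hg₀0, hg₀e⟩ := h
    have : hf.order = ((n+1 : ℕ) : ℕ∞) := by
      rw [hf.order_eq_nat_iff]
      exact ⟨g₀, hg₀, hg₀0, by
        filter_upwards [heq, hg₀e] with w h1 h2
        rw [h1, h2]; simp [smul_eq_mul]; ring⟩
    rw [this]; push_cast; rfl

noncomputable def mob (a w : ℂ) : ℂ := (a - w) / (1 - (starRingEnd ℂ) a * w)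

lemma mob_denom_ne {a w : ℂ} (ha : ‖a‖ < 1) (hw : ‖w‖ ≤ 1) :
    1 - (starRingEnd ℂ) a * w ≠ 0 := by
  intro h
  have h2 : (1:ℂ) = (starRingEnd ℂ) a * w := by linear_combination h
  have : (1:ℝ) = ‖(starRingEnd ℂ) a * w‖ := by rw [← h2]; simp
  rw [norm_mul] at this
  simp only [RCLike.norm_conj] at this
  nlinarith [norm_nonneg a, norm_nonneg w]

lemma norm_sub_lt_norm_one_sub' (u v : ℂ) (hu : ‖u‖ < 1) (hv : ‖v‖ < 1) :
    ‖u - v‖ < ‖1 - (starRingEnd ℂ) v * u‖ := by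
  have h : ‖1 - (starRingEnd ℂ) v * u‖^2 = ‖u - v‖^2 + (1-‖u‖^2)*(1-‖v‖^2) := by
    simp only [Complex.sq_norm, Complex.normSq_apply,
      Complex.sub_re, Complex.sub_im, Complex.mul_re, Complex.mul_im, Complex.one_re,
      Complex.one_im, Complex.conj_re, Complex.conj_im]
    ring
  have h1 : 0 < (1-‖u‖^2)*(1-‖v‖^2) :=
    mul_pos (by nlinarith [norm_nonneg u]) (by nlinarith [norm_nonneg v])
  nlinarith [norm_nonneg (u - v), norm_nonneg (1 - (starRingEnd ℂ) v * u)]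

lemma division {g : ℂ → ℂ} (hg : DifferentiableOn ℂ g (ball 0 1))
    (hgb : ∀ w ∈ ball (0:ℂ) 1, ‖g w‖ ≤ 1) {a : ℂ} (ha : a ∈ ball (0:ℂ) 1) (hga : g a = 0) :
    ∃ g₁ : ℂ → ℂ, DifferentiableOn ℂ g₁ (ball 0 1) ∧ (∀ w ∈ ball (0:ℂ) 1, ‖g₁ w‖ ≤ 1) ∧
      ∀ w ∈ ball (0:ℂ) 1, g w = mob a w * g₁ w := by
  rw [mem_ball_zero_iff] at ha
  set g₁ : ℂ → ℂ := fun w => -(1 - (starRingEnd ℂ) a * w) * dslope g a w with hg₁def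
  have hdsl : DifferentiableOn ℂ (dslope g a) (ball 0 1) :=
    (Complex.differentiableOn_dslope (isOpen_ball.mem_nhds (mem_ball_zero_iff.mpr ha))).mpr hg
  have hdiff : DifferentiableOn ℂ g₁ (ball 0 1) := by
    apply DifferentiableOn.mul _ hdsl
    apply DifferentiableOn.neg
    exact (differentiableOn_const _).sub ((differentiableOn_const _).mul differentiableOn_id)
  have hfact : ∀ w ∈ ball (0:ℂ) 1, g w = mob a w * g₁ w := by
    intro w hw
    rw [mem_ball_zero_iff] at hw
    have hden : 1 - (starRingEnd ℂ) a * w ≠ 0 := mob_denom_ne ha hw.le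
    have hds : (w - a) * dslope g a w = g w - g a := by
      have := sub_smul_dslope g a w
      simpa [smul_eq_mul] using this
    have hmg : mob a w * g₁ w = (w - a) * dslope g a w := by
      rw [mob, hg₁def]
      beta_reduce
      rw [div_mul_eq_mul_div, div_eq_iff hden]
      ring
    rw [hmg, hds, hga, sub_zero]
  refine ⟨g₁, hdiff, ?_, hfact⟩
  intro w hw
  rw [mem_ball_zero_iff] at hw
  set R₀ : ℝ := max ‖w‖ ‖a‖ with hR₀
  have hR₀1 : R₀ < 1 := max_lt hw ha
  have hR₀0 : 0 ≤ R₀ := le_trans (norm_nonneg w) (le_max_left _ _)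
  -- bound for each ρ
  have hbd : ∀ ρ ∈ Ioo R₀ 1, ‖g₁ w‖ ≤ (1 - ‖a‖*ρ)/(ρ - ‖a‖) := by
    intro ρ hρ
    obtain ⟨hρ1, hρ2⟩ := hρ
    have hρ0 : 0 < ρ := lt_of_le_of_lt hR₀0 hρ1
    have haρ : ‖a‖ < ρ := lt_of_le_of_lt (le_max_right _ _) hρ1
    have hsub : closedBall (0:ℂ) ρ ⊆ ball 0 1 := closedBall_subset_ball hρ2
    have hdc : DiffContOnCl ℂ g₁ (ball 0 ρ) := by
      apply DifferentiableOn.diffContOnCl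
      rw [closure_ball (0:ℂ) hρ0.ne']
      exact hdiff.mono hsub
    have hfr : ∀ u ∈ frontier (ball (0:ℂ) ρ), ‖g₁ u‖ ≤ (1 - ‖a‖*ρ)/(ρ - ‖a‖) := by
      intro u hu
      rw [frontier_ball (0:ℂ) hρ0.ne'] at hu
      have hun : ‖u‖ = ρ := by simpa using hu
      have huball : u ∈ ball (0:ℂ) 1 := by rw [mem_ball_zero_iff, hun]; exact hρ2
      have hau : a ≠ u := fun h => by rw [h, hun] at haρ; exact lt_irrefl _ haρ
      have hden : 1 - (starRingEnd ℂ) a * u ≠ 0 := mob_denom_ne ha (by rw [hun]; exact hρ2.le)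
      have hmobne : mob a u ≠ 0 := div_ne_zero (sub_ne_zero.mpr hau) hden
      have heq := hfact u huball
      have hg₁u : ‖g₁ u‖ * ‖mob a u‖ ≤ 1 := by
        rw [mul_comm, ← norm_mul, ← heq]; exact hgb u huball
      have hmob_lower : (ρ - ‖a‖)/(1 - ‖a‖*ρ) ≤ ‖mob a u‖ := by
        have hkey : (‖u‖ - ‖a‖) * ‖1 - (starRingEnd ℂ) a * u‖ ≤ ‖u - a‖ * (1 - ‖a‖*‖u‖) := by
          have h3 : 0 ≤ (1-‖u‖^2)*(1-‖a‖^2) := mul_nonneg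
            (by nlinarith [norm_nonneg u, hun, hρ2]) (by nlinarith [norm_nonneg a])
          have hid : ‖1 - (starRingEnd ℂ) a * u‖^2 = ‖u - a‖^2 + (1-‖u‖^2)*(1-‖a‖^2) := by
            simp only [Complex.sq_norm, Complex.normSq_apply,
              Complex.sub_re, Complex.sub_im, Complex.mul_re, Complex.mul_im, Complex.one_re,
              Complex.one_im, Complex.conj_re, Complex.conj_im]
            ring
          have hDge : 1 - ‖a‖*‖u‖ ≤ ‖1 - (starRingEnd ℂ) a * u‖ := by
            calc 1 - ‖a‖*‖u‖ = ‖(1:ℂ)‖ - ‖(starRingEnd ℂ) a * u‖ := by simp [norm_mul]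
              _ ≤ _ := norm_sub_norm_le _ _
          have hqp : 0 < 1 - ‖a‖*‖u‖ := by nlinarith [norm_nonneg a, norm_nonneg u, hun]
          have h2 : (1-‖a‖*‖u‖)^2 ≤ ‖1 - (starRingEnd ℂ) a * u‖^2 := by
            nlinarith [norm_nonneg (1 - (starRingEnd ℂ) a * u)]
          have key : ((‖u‖-‖a‖) * ‖1 - (starRingEnd ℂ) a * u‖)^2
              ≤ (‖u - a‖ * (1 - ‖a‖*‖u‖))^2 := by
            nlinarith [mul_nonneg h3 (sub_nonneg.2 h2)]
          have hba : 0 ≤ (‖u‖-‖a‖) * ‖1 - (starRingEnd ℂ) a * u‖ :=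
            mul_nonneg (by nlinarith) (norm_nonneg _)
          have hbb : 0 ≤ ‖u - a‖ * (1 - ‖a‖*‖u‖) := mul_nonneg (norm_nonneg _) hqp.le
          exact (pow_le_pow_iff_left₀ hba hbb two_ne_zero).mp key
        rw [mob, norm_div]
        rw [hun] at hkey
        have hD0 : 0 < ‖1 - (starRingEnd ℂ) a * u‖ := norm_pos_iff.mpr hden
        rw [div_le_div_iff₀ (by nlinarith [norm_nonneg a]) hD0]
        calc (ρ - ‖a‖) * ‖1 - (starRingEnd ℂ) a * u‖ ≤ ‖u - a‖ * (1 - ‖a‖*ρ) := hkey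
          _ = ‖a - u‖ * (1 - ‖a‖*ρ) := by rw [norm_sub_rev]
      have hmob0 : 0 < ‖mob a u‖ := norm_pos_iff.mpr hmobne
      have h1aρ : 0 < 1 - ‖a‖*ρ := by nlinarith [norm_nonneg a]
      have hml : ρ - ‖a‖ ≤ ‖mob a u‖ * (1-‖a‖*ρ) := by
        rw [div_le_iff₀ h1aρ] at hmob_lower; linarith
      rw [le_div_iff₀ (by linarith : (0:ℝ) < ρ - ‖a‖)]
      nlinarith [mul_le_mul_of_nonneg_left hml (norm_nonneg (g₁ u)),
        mul_le_mul_of_nonneg_right hg₁u h1aρ.le]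
    have := Complex.norm_le_of_forall_mem_frontier_norm_le isBounded_ball hdc hfr
      (subset_closure (mem_ball_zero_iff.mpr (lt_of_le_of_lt (le_max_left ‖w‖ ‖a‖) hρ1)))
    exact this
  -- take the limit ρ → 1⁻
  have htend : Filter.Tendsto (fun ρ : ℝ => (1 - ‖a‖*ρ)/(ρ - ‖a‖)) (nhdsWithin 1 (Iio 1))
      (nhds 1) := by
    have h1 : Filter.Tendsto (fun ρ : ℝ => (1 - ‖a‖*ρ)/(ρ - ‖a‖)) (nhds 1)
        (nhds ((1 - ‖a‖*1)/(1 - ‖a‖))) := by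
      apply Filter.Tendsto.div
      · exact (tendsto_const_nhds.sub (tendsto_const_nhds.mul tendsto_id))
      · exact tendsto_id.sub tendsto_const_nhds
      · intro h; rw [sub_eq_zero] at h; exact (ne_of_lt ha) h.symm
    have h2 : (1 - ‖a‖*1)/(1 - ‖a‖) = 1 := by
      rw [mul_one]; exact div_self (by intro h; rw [sub_eq_zero] at h; exact (ne_of_lt ha) h.symm)
    rw [h2] at h1
    exact h1.mono_left nhdsWithin_le_nhds
  have hev : ∀ᶠ ρ in nhdsWithin (1:ℝ) (Iio 1), ‖g₁ w‖ ≤ (1 - ‖a‖*ρ)/(ρ - ‖a‖) := by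
    have hmem : Ioo R₀ 1 ∈ nhdsWithin (1:ℝ) (Iio 1) := by
      rw [mem_nhdsWithin]
      exact ⟨Ioi R₀, isOpen_Ioi, hR₀1, fun x hx => ⟨hx.1, hx.2⟩⟩
    filter_upwards [hmem] with ρ hρ
    exact hbd ρ hρ
  exact ge_of_tendsto htend hev

lemma blaschke_bound (S : Multiset ℂ) : ∀ (g : ℂ → ℂ),
    DifferentiableOn ℂ g (ball 0 1) → (∀ w ∈ ball (0:ℂ) 1, ‖g w‖ ≤ 1) →
    (∀ ζ ∈ S, ζ ∈ ball (0:ℂ) 1) →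
    (∀ ζ ∈ S, ∃ h : AnalyticAt ℂ g ζ, (S.count ζ : ℕ∞) ≤ h.order) →
    ‖g 0‖ ≤ (S.map norm).prod := by
  induction S using Multiset.induction with
  | empty =>
    intro g hd hb _ _
    simpa using hb 0 (by simp)
  | cons a s ih =>
    intro g hd hb hball horder
    have hamem : a ∈ ball (0:ℂ) 1 := hball a (Multiset.mem_cons_self a s)
    have ha : ‖a‖ < 1 := mem_ball_zero_iff.mp hamem
    obtain ⟨hA, hord⟩ := horder a (Multiset.mem_cons_self a s)
    have h1 : 1 ≤ hA.order := by
      refine le_trans ?_ hord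
      rw [Multiset.count_cons_self]
      exact_mod_cast Nat.le_add_left 1 _
    have hga : g a = 0 := order_value_zero_of_one_le hA h1
    obtain ⟨g₁, hd₁, hb₁, hfact⟩ := division hd hb hamem hga
    have hA₁ : AnalyticOnNhd ℂ g₁ (ball 0 1) := hd₁.analyticOnNhd isOpen_ball
    have ihapp : ‖g₁ 0‖ ≤ (s.map norm).prod := by
      apply ih g₁ hd₁ hb₁ (fun ζ hζ => hball ζ (Multiset.mem_cons_of_mem hζ))
      intro ζ hζ
      have hζb : ζ ∈ ball (0:ℂ) 1 := hball ζ (Multiset.mem_cons_of_mem hζ)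
      have hζn : ‖ζ‖ < 1 := mem_ball_zero_iff.mp hζb
      obtain ⟨hA', hcnt⟩ := horder ζ (Multiset.mem_cons_of_mem hζ)
      have hAg₁ : AnalyticAt ℂ g₁ ζ := hA₁ ζ hζb
      have heqv : ∀ᶠ w in nhds ζ, g w = mob a w * g₁ w :=
        Filter.eventually_of_mem (isOpen_ball.mem_nhds hζb) hfact
      refine ⟨hAg₁, ?_⟩
      by_cases hne : ζ = a
      · subst hne
        have hden : 1 - (starRingEnd ℂ) ζ * ζ ≠ 0 := mob_denom_ne hζn hζn.le
        set u : ℂ → ℂ := fun w => -(1 - (starRingEnd ℂ) ζ * w)⁻¹ with hu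
        have hUA : AnalyticAt ℂ u ζ := by
          apply AnalyticAt.neg
          apply AnalyticAt.inv
          · exact (analyticAt_const.sub (analyticAt_const.mul (analyticAt_id)))
          · exact hden
        have hu0 : u ζ ≠ 0 := by
          simp only [hu, ne_eq, neg_eq_zero, inv_eq_zero]
          exact hden
        have heqv2 : ∀ᶠ w in nhds ζ, g w = (w - ζ) * (fun w => u w * g₁ w) w := by
          have hop : ∀ᶠ w in nhds ζ, w ∈ ball (0:ℂ) 1 :=
            Filter.eventually_of_mem (isOpen_ball.mem_nhds hζb) (fun w hw => hw)
          filter_upwards [heqv, hop] with w hw hwb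
          have hdenw : 1 - (starRingEnd ℂ) ζ * w ≠ 0 :=
            mob_denom_ne ha (mem_ball_zero_iff.mp hwb).le
          rw [hw, mob, hu]
          field_simp
          ring
        have hUG : AnalyticAt ℂ (fun w => u w * g₁ w) ζ := hUA.mul hAg₁
        have ho1 : hA'.order = hUG.order + 1 := order_sub_mul hA' hUG heqv2
        have ho2 : hUG.order = hAg₁.order := by
          apply order_unit_mul hUG hUA hAg₁ hu0
          filter_upwards with w; rfl
        have hcount : ((ζ ::ₘ s).count ζ : ℕ∞) = (s.count ζ : ℕ∞) + 1 := by
          rw [Multiset.count_cons_self]; push_cast; rfl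
        rw [hcount, ho1, ho2] at hcnt
        exact (WithTop.add_le_add_iff_right (by simp : (1:ℕ∞) ≠ ⊤)).mp hcnt
      · -- ζ ≠ a : mob is a unit at ζ
        have hden : 1 - (starRingEnd ℂ) a * ζ ≠ 0 := mob_denom_ne ha hζn.le
        have hMA : AnalyticAt ℂ (mob a) ζ := by
          apply AnalyticAt.div
          · exact analyticAt_const.sub (analyticAt_id)
          · exact analyticAt_const.sub (analyticAt_const.mul (analyticAt_id))
          · exact hden
        have hM0 : mob a ζ ≠ 0 :=
          div_ne_zero (sub_ne_zero.mpr (fun h => hne (h.symm))) hden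
        have ho : hA'.order = hAg₁.order := order_unit_mul hA' hMA hAg₁ hM0 heqv
        rw [← ho]
        refine le_trans ?_ hcnt
        have : s.count ζ ≤ (a ::ₘ s).count ζ := by
          rw [Multiset.count_cons_of_ne hne]
        exact_mod_cast this
    have h0mem : (0:ℂ) ∈ ball (0:ℂ) 1 := by simp
    have hg0 : g 0 = mob a 0 * g₁ 0 := hfact 0 h0mem
    have hmob0 : ‖mob a 0‖ = ‖a‖ := by simp [mob]
    rw [Multiset.map_cons, Multiset.prod_cons, hg0, norm_mul, hmob0]
    exact mul_le_mul_of_nonneg_left ihapp (norm_nonneg a)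


section weight
variable {ω : ℝ → ℝ} (hnn : ∀ r ∈ Set.Ico (0:ℝ) 1, 0 ≤ ω r)
  (hint : IntegrableOn ω (Set.Ioo (0:ℝ) 1))

include hnn in
lemma what_nonneg {r : ℝ} (hr : 0 ≤ r) : 0 ≤ ∫ s in Set.Ioo r 1, ω s := by
  apply setIntegral_nonneg measurableSet_Ioo
  intro x hx
  exact hnn x ⟨(hr.trans_lt hx.1).le, hx.2⟩

include hnn hint in
lemma what_anti {r r' : ℝ} (h0 : 0 ≤ r) (h : r ≤ r') :
    (∫ s in Set.Ioo r' 1, ω s) ≤ ∫ s in Set.Ioo r 1, ω s := by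
  apply setIntegral_mono_set
  · exact hint.mono_set (fun x hx => ⟨h0.trans_lt hx.1, hx.2⟩)
  · filter_upwards [ae_restrict_mem measurableSet_Ioo] with x hx
    exact hnn x ⟨(h0.trans_lt hx.1).le, hx.2⟩
  · exact HasSubset.Subset.eventuallyLE (fun x hx => ⟨h.trans_lt hx.1, hx.2⟩)

include hnn hint in
lemma integrand_integrable {r : ℝ} (h0 : 0 < r) (h1 : r < 1) :
    IntegrableOn (fun s => ω s * Real.log (s / r) * s) (Set.Ioo r 1) := by
  have hωr : IntegrableOn ω (Set.Ioo r 1) :=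
    hint.mono_set (fun x hx => ⟨h0.trans hx.1, hx.2⟩)
  have hmeas : AEStronglyMeasurable (fun s => ω s * Real.log (s / r) * s)
      ((volume : Measure ℝ).restrict (Set.Ioo r 1)) := by
    exact ((hωr.aestronglyMeasurable.mul
      ((Real.measurable_log.comp (measurable_id.div_const r)).aestronglyMeasurable)).mul
      measurable_id.aestronglyMeasurable)
  apply Integrable.mono' (hωr.mul_const (Real.log (1/r))) hmeas
  filter_upwards [ae_restrict_mem measurableSet_Ioo] with s hs
  have hs0 : 0 < s := h0.trans hs.1
  have hωs : 0 ≤ ω s := hnn s ⟨hs0.le, hs.2⟩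
  have hL0 : 0 ≤ Real.log (s/r) := Real.log_nonneg ((one_le_div h0).mpr hs.1.le)
  have hLle : Real.log (s/r) ≤ Real.log (1/r) :=
    Real.log_le_log (by positivity) (by gcongr; exact hs.2.le)
  rw [Real.norm_eq_abs, abs_of_nonneg (by positivity)]
  calc ω s * Real.log (s/r) * s ≤ ω s * Real.log (s/r) * 1 :=
        mul_le_mul_of_nonneg_left hs.2.le (by positivity)
    _ = ω s * Real.log (s/r) := mul_one _
    _ ≤ ω s * Real.log (1/r) := mul_le_mul_of_nonneg_left hLle hωs

include hnn in
lemma wstar_nonneg {r : ℝ} (h0 : 0 < r) : 0 ≤ wstar ω r := by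
  apply setIntegral_nonneg measurableSet_Ioo
  intro x hx
  have hx0 : 0 < x := h0.trans hx.1
  have := hnn x ⟨hx0.le, hx.2⟩
  have hL : 0 ≤ Real.log (x/r) := Real.log_nonneg ((one_le_div h0).mpr hx.1.le)
  positivity

include hnn hint in
lemma wstar_upper {r : ℝ} (h0 : (1:ℝ)/2 ≤ r) (h1 : r < 1) :
    wstar ω r ≤ 2*(1-r) * ∫ s in Set.Ioo r 1, ω s := by
  have hr0 : 0 < r := lt_of_lt_of_le (by norm_num) h0
  have hωr : IntegrableOn ω (Set.Ioo r 1) :=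
    hint.mono_set (fun x hx => ⟨hr0.trans hx.1, hx.2⟩)
  have step : wstar ω r ≤ ∫ s in Set.Ioo r 1, ω s * (2*(1-r)) := by
    apply setIntegral_mono_on (integrand_integrable hnn hint hr0 h1) (hωr.mul_const _)
      measurableSet_Ioo
    intro s hs
    have hs0 : 0 < s := hr0.trans hs.1
    have hωs : 0 ≤ ω s := hnn s ⟨hs0.le, hs.2⟩
    have hL0 : 0 ≤ Real.log (s/r) := Real.log_nonneg ((one_le_div hr0).mpr hs.1.le)
    have hL2 : Real.log (s/r) ≤ 2*(1-r) := by
      have := Real.log_le_sub_one_of_pos (show (0:ℝ) < s/r by positivity)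
      have h2 : s/r - 1 = (s-r)/r := by field_simp
      have h3 : (s-r)/r ≤ (s-r)*2 := by
        rw [div_le_iff₀ hr0]
        nlinarith [hs.1.le]
      nlinarith [hs.2.le]
    calc ω s * Real.log (s/r) * s ≤ ω s * Real.log (s/r) * 1 :=
          mul_le_mul_of_nonneg_left hs.2.le (by positivity)
      _ = ω s * Real.log (s/r) := mul_one _
      _ ≤ ω s * (2*(1-r)) := mul_le_mul_of_nonneg_left hL2 hωs
  calc wstar ω r ≤ ∫ s in Set.Ioo r 1, ω s * (2*(1-r)) := step
    _ = (∫ s in Set.Ioo r 1, ω s) * (2*(1-r)) := by rw [integral_mul_const]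
    _ = 2*(1-r) * ∫ s in Set.Ioo r 1, ω s := mul_comm _ _

include hnn hint in
lemma wstar_lower {r : ℝ} (h0 : 0 < r) (h1 : r < 1) :
    (1-r) * (∫ s in Set.Ioo ((1+r)/2) 1, ω s) ≤ 2 * wstar ω r := by
  have hmid0 : 0 < (1+r)/2 := by linarith
  have hmid1 : (1+r)/2 < 1 := by linarith
  have hrmid : r < (1+r)/2 := by linarith
  have step1 : ∫ s in Set.Ioo ((1+r)/2) 1, ω s * ((1-r)/2)
      ≤ ∫ s in Set.Ioo ((1+r)/2) 1, ω s * Real.log (s / r) * s := by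
    apply setIntegral_mono_on
    · exact (hint.mono_set (fun x hx => ⟨hmid0.trans hx.1, hx.2⟩)).mul_const _
    · exact (integrand_integrable hnn hint h0 h1).mono_set
        (fun x hx => ⟨hrmid.trans hx.1, hx.2⟩)
    · exact measurableSet_Ioo
    · intro s hs
      have hs0 : 0 < s := hmid0.trans hs.1
      have hωs : 0 ≤ ω s := hnn s ⟨hs0.le, hs.2⟩
      have hlog : 1 - r/s ≤ Real.log (s/r) := by
        have := Real.log_le_sub_one_of_pos (show (0:ℝ) < (s/r)⁻¹ by positivity)
        rw [Real.log_inv] at this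
        have h2 : (s/r)⁻¹ = r/s := by field_simp
        rw [h2] at this
        linarith
      have hls : (1-r)/2 ≤ Real.log (s/r) * s := by
        have h3 : (1 - r/s) * s = s - r := by field_simp
        have h4 : s - r ≤ Real.log (s/r) * s := by
          calc s - r = (1 - r/s) * s := h3.symm
            _ ≤ Real.log (s/r) * s := mul_le_mul_of_nonneg_right hlog hs0.le
        have h5 : (1-r)/2 ≤ s - r := by linarith [hs.1]
        linarith
      calc ω s * ((1-r)/2) ≤ ω s * (Real.log (s/r) * s) :=
            mul_le_mul_of_nonneg_left hls hωs
        _ = ω s * Real.log (s/r) * s := by ring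
  have step2 : ∫ s in Set.Ioo ((1+r)/2) 1, ω s * Real.log (s / r) * s ≤ wstar ω r := by
    apply setIntegral_mono_set (integrand_integrable hnn hint h0 h1)
    · filter_upwards [ae_restrict_mem measurableSet_Ioo] with s hs
      have hs0 : 0 < s := h0.trans hs.1
      have hωs : 0 ≤ ω s := hnn s ⟨hs0.le, hs.2⟩
      have hL : 0 ≤ Real.log (s/r) := Real.log_nonneg ((one_le_div h0).mpr hs.1.le)
      positivity
    · exact HasSubset.Subset.eventuallyLE (fun x hx => ⟨hrmid.trans hx.1, hx.2⟩)
  have := le_trans step1 step2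
  rw [integral_mul_const] at this
  linarith

include hnn in
lemma doubling_iter {C : ℝ}
    (hdoubling : ∀ r ∈ Set.Ico (0:ℝ) 1,
      (∫ s in Set.Ioo r 1, ω s) ≤ C * ∫ s in Set.Ioo ((1 + r)/2) 1, ω s) :
    ∀ n : ℕ, ∀ r : ℝ, 0 ≤ r → r < 1 →
      (∫ s in Set.Ioo r 1, ω s) ≤ (max C 1)^n * ∫ s in Set.Ioo (1 - (1-r)/2^n) 1, ω s := by
  intro n
  induction n with
  | zero => intro r h0 h1; simp
  | succ n ih =>
    intro r h0 h1
    have h2 : (∫ s in Set.Ioo r 1, ω s) ≤ (max C 1) * ∫ s in Set.Ioo ((1 + r)/2) 1, ω s := by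
      refine le_trans (hdoubling r ⟨h0, h1⟩) ?_
      apply mul_le_mul_of_nonneg_right (le_max_left _ _)
      exact what_nonneg hnn (by linarith)
    have h3 := ih ((1+r)/2) (by linarith) (by linarith)
    have hset : 1 - (1-(1+r)/2)/2^n = 1 - (1-r)/2^(n+1) := by
      rw [pow_succ]
      field_simp
      ring
    rw [hset] at h3
    calc (∫ s in Set.Ioo r 1, ω s) ≤ (max C 1) * ∫ s in Set.Ioo ((1 + r)/2) 1, ω s := h2
      _ ≤ (max C 1) * ((max C 1)^n * ∫ s in Set.Ioo (1 - (1-r)/2^(n+1)) 1, ω s) := by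
          apply mul_le_mul_of_nonneg_left h3 (le_trans zero_le_one (le_max_right _ _))
      _ = (max C 1)^(n+1) * ∫ s in Set.Ioo (1 - (1-r)/2^(n+1)) 1, ω s := by ring

end weight


lemma prod_map_sum_replicate {β : Type*} (F : Finset β) (m : β → ℕ) (v : β → ℂ) :
    ((∑ ζ ∈ F, Multiset.replicate (m ζ) (v ζ)).map norm).prod = ∏ ζ ∈ F, ‖v ζ‖ ^ m ζ := by
  classical
  induction F using Finset.induction with
  | empty => simp
  | insert _ _ hx ih =>
    rw [Finset.sum_insert hx, Multiset.map_add, Multiset.prod_add, ih,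
      Finset.prod_insert hx, Multiset.map_replicate, Multiset.prod_replicate]

lemma order_pos_of_value_zero {f : ℂ → ℂ} {a : ℂ} (hf : AnalyticAt ℂ f a)
    (h : f a = 0) : 1 ≤ hf.order := by
  rw [ENat.one_le_iff_ne_zero]
  intro h0
  have h0' : hf.order = ((0:ℕ) : ℕ∞) := by exact_mod_cast h0
  rw [hf.order_eq_nat_iff] at h0'
  obtain ⟨g, hg, hg0, hge⟩ := h0'
  have := hge.self_of_nhds
  simp only [pow_zero, one_smul] at this
  rw [this] at h
  exact hg0 h



lemma norm_sq_identity (u v : ℂ) :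
    ‖1 - (starRingEnd ℂ) v * u‖^2 = ‖u - v‖^2 + (1-‖u‖^2)*(1-‖v‖^2) := by
  simp only [Complex.sq_norm, Complex.normSq_apply,
    Complex.sub_re, Complex.sub_im, Complex.mul_re, Complex.mul_im, Complex.one_re,
    Complex.one_im, Complex.conj_re, Complex.conj_im]
  ring

lemma norm_one_sub_conj_mul_ge (u v : ℂ) : 1 - ‖v‖*‖u‖ ≤ ‖1 - (starRingEnd ℂ) v * u‖ := by
  calc 1 - ‖v‖*‖u‖ = ‖(1:ℂ)‖ - ‖(starRingEnd ℂ) v * u‖ := by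
        simp [norm_mul]
    _ ≤ ‖1 - (starRingEnd ℂ) v * u‖ := norm_sub_norm_le _ _

lemma norm_sub_lt_norm_one_sub (u v : ℂ) (hu : ‖u‖ < 1) (hv : ‖v‖ < 1) :
    ‖u - v‖ < ‖1 - (starRingEnd ℂ) v * u‖ := by
  have h := norm_sq_identity u v
  have h1 : 0 < (1-‖u‖^2)*(1-‖v‖^2) :=
    mul_pos (by nlinarith [norm_nonneg u]) (by nlinarith [norm_nonneg v])
  nlinarith [norm_nonneg (u - v), norm_nonneg (1 - (starRingEnd ℂ) v * u)]

lemma pseudo_lower (u v : ℂ) (hu : ‖u‖ < 1) (hvu : ‖v‖ ≤ ‖u‖) :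
    (‖u‖ - ‖v‖) * ‖1 - (starRingEnd ℂ) v * u‖ ≤ ‖u - v‖ * (1 - ‖v‖*‖u‖) := by
  set D := ‖1 - (starRingEnd ℂ) v * u‖ with hD
  set E := ‖u - v‖ with hE
  set p := ‖u‖; set q := ‖v‖
  have hq0 : 0 ≤ q := norm_nonneg v
  have hv : q < 1 := lt_of_le_of_lt hvu hu
  have hid : D^2 = E^2 + (1-p^2)*(1-q^2) := norm_sq_identity u v
  have hDge : 1 - q*p ≤ D := norm_one_sub_conj_mul_ge u v
  have hE0 : 0 ≤ E := norm_nonneg _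
  have hD0 : 0 ≤ D := norm_nonneg _
  have hp0 : 0 ≤ p := norm_nonneg u
  have hqp : 0 < 1 - q*p := by nlinarith
  have h3 : 0 ≤ (1-p^2)*(1-q^2) := mul_nonneg (by nlinarith) (by nlinarith)
  have h2 : (1-q*p)^2 ≤ D^2 := by nlinarith
  have key : ((p-q)*D)^2 ≤ (E*(1-q*p))^2 := by
    nlinarith [mul_nonneg h3 (sub_nonneg.2 h2)]
  have ha : 0 ≤ (p-q)*D := mul_nonneg (sub_nonneg.2 hvu) hD0
  have hb : 0 ≤ E*(1-q*p) := mul_nonneg hE0 hqp.le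
  exact (pow_le_pow_iff_left₀ ha hb two_ne_zero).mp key

set_option maxHeartbeats 1000000 in
/-- If `ω ∈ D̂`, then for every analytic self-map `φ` of the disc there
are `M > 0` and `r₀ ∈ (0,1)` with `N_{φ,ω*}(z) ≤ M ω*(|z|)` for `r₀ ≤ |z| < 1`. -/
theorem stmt_10 (ω : ℝ → ℝ)
    (hω_nonneg : ∀ r ∈ Set.Ico (0:ℝ) 1, 0 ≤ ω r)
    (hω_int : IntegrableOn ω (Set.Ioo (0:ℝ) 1))
    (C : ℝ) (hC : 0 < C)
    (hdoubling : ∀ r ∈ Set.Ico (0:ℝ) 1,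
      (∫ s in Set.Ioo r 1, ω s) ≤ C * ∫ s in Set.Ioo ((1 + r)/2) 1, ω s)
    (φ : ℂ → ℂ) (hφ : DifferentiableOn ℂ φ (Metric.ball 0 1))
    (hmaps : Set.MapsTo φ (Metric.ball 0 1) (Metric.ball 0 1)) :
    ∃ M > (0:ℝ), ∃ r₀ ∈ Set.Ioo (0:ℝ) 1, ∀ z ∈ Metric.ball (0:ℂ) 1,
      r₀ ≤ ‖z‖ → z ≠ φ 0 → nev ω φ z ≤ M * wstar ω ‖z‖ := by
  have ha0 : (0:ℂ) ∈ ball (0:ℂ) 1 := by simp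
  set a : ℂ := φ 0 with ha_def
  have haball : a ∈ ball (0:ℂ) 1 := hmaps ha0
  set α : ℝ := ‖a‖ with hα
  have hα1 : α < 1 := mem_ball_zero_iff.mp haball
  have hα0 : 0 ≤ α := norm_nonneg a
  set K : ℝ := 2/(1-α) with hK
  have hKpos : 0 < K := by rw [hK]; exact div_pos two_pos (by linarith)
  have hK1 : 1 ≤ K := by rw [hK, le_div_iff₀ (by linarith)]; linarith
  obtain ⟨n, hn⟩ := exists_nat_ge K
  have h2n : K ≤ 2^n := le_trans hn (by exact_mod_cast (Nat.lt_two_pow_self (n := n)).le)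
  set C' : ℝ := max C 1 with hC'
  have hC'1 : 1 ≤ C' := le_max_right _ _
  have hC'0 : 0 < C' := lt_of_lt_of_le one_pos hC'1
  set r₀ : ℝ := max ((1+2*α)/(2+α)) ((1+α)/2) with hr₀
  have hr₀1 : r₀ < 1 := max_lt (by rw [div_lt_one (by linarith)]; linarith) (by linarith)
  have hr₀0 : 0 < r₀ :=
    lt_of_lt_of_le (show (0:ℝ) < (1+α)/2 by linarith) (le_max_right _ _)
  set M : ℝ := 8*K*C'^(n+1) with hM
  have hMpos : 0 < M := by rw [hM]; positivity
  refine ⟨M, hMpos, r₀, ⟨hr₀0, hr₀1⟩, ?_⟩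
  intro z hz hr₀z hza
  set R : ℝ := ‖z‖ with hR
  have hR1 : R < 1 := mem_ball_zero_iff.mp hz
  have hRhalf : (1+α)/2 ≤ R := le_trans (le_max_right _ _) hr₀z
  have hRα : α < R := lt_of_lt_of_le (by linarith) hRhalf
  have hR0 : 0 < R := lt_of_le_of_lt hα0 hRα
  have hαR1 : α*R < 1 := by nlinarith
  set ρ : ℝ := (R - α)/(1 - α*R) with hρdef
  have hρpos : 0 < ρ := div_pos (by linarith) (by linarith)
  have hρhalf : 1/2 ≤ ρ := by
    rw [hρdef, le_div_iff₀ (by linarith)]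
    have h := le_trans (le_max_left ((1+2*α)/(2+α)) ((1+α)/2)) hr₀z
    rw [div_le_iff₀ (by linarith : (0:ℝ) < 2+α)] at h
    linarith
  have hρ1 : ρ < 1 := by rw [hρdef, div_lt_one (by linarith)]; nlinarith
  -- the Schwarz--Pick transform of φ
  set h : ℂ → ℂ := fun w => (φ w - z)/(1 - (starRingEnd ℂ) z * φ w) with hh
  have hzn : ‖z‖ < 1 := hR1
  have hdenh : ∀ w ∈ ball (0:ℂ) 1, 1 - (starRingEnd ℂ) z * φ w ≠ 0 := fun w hw =>
    mob_denom_ne hzn (mem_ball_zero_iff.mp (hmaps hw)).le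
  have hdh : DifferentiableOn ℂ h (ball 0 1) := by
    apply DifferentiableOn.div (hφ.sub (differentiableOn_const _))
      ((differentiableOn_const _).sub ((differentiableOn_const _).mul hφ)) hdenh
  have hbh : ∀ w ∈ ball (0:ℂ) 1, ‖h w‖ ≤ 1 := by
    intro w hw
    rw [hh]
    simp only [norm_div]
    rw [div_le_one (norm_pos_iff.mpr (hdenh w hw))]
    exact (norm_sub_lt_norm_one_sub' (φ w) z (mem_ball_zero_iff.mp (hmaps hw)) hzn).le
  have hAφz : AnalyticOnNhd ℂ (fun w => φ w - z) (ball 0 1) :=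
    (hφ.sub (differentiableOn_const _)).analyticOnNhd isOpen_ball
  have hAh : AnalyticOnNhd ℂ h (ball 0 1) := hdh.analyticOnNhd isOpen_ball
  -- fiber points
  set T : Set ℂ := ball (0:ℂ) 1 ∩ φ ⁻¹' {z} with hT
  have hfiber : ∀ ζ : ↥T, ((ζ:ℂ) ∈ ball (0:ℂ) 1) ∧ φ (ζ:ℂ) = z := fun ζ => ⟨ζ.2.1, ζ.2.2⟩
  have horder_facts : ∀ ζ : ↥T,
      ∃ hA : AnalyticAt ℂ (fun w => φ w - z) (ζ:ℂ),
        1 ≤ hA.order ∧ hA.order ≠ ⊤ ∧ (multOf φ z (ζ:ℂ) : ℕ∞) = hA.order ∧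
        ∃ hAhζ : AnalyticAt ℂ h (ζ:ℂ), hAhζ.order = hA.order := by
    intro ζ
    obtain ⟨hζb, hφζ⟩ := hfiber ζ
    have hA : AnalyticAt ℂ (fun w => φ w - z) (ζ:ℂ) := hAφz _ hζb
    have h1 : 1 ≤ hA.order := order_pos_of_value_zero hA (by simp [hφζ])
    have hne : hA.order ≠ ⊤ := by
      intro htop
      rw [hA.order_eq_top_iff] at htop
      have hev : (fun w => φ w - z) =ᶠ[nhds (ζ:ℂ)] 0 := htop.mono (fun x hx => by simpa using hx)
      have := hAφz.eqOn_zero_of_preconnected_of_eventuallyEq_zero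
        ((convex_ball (0:ℂ) 1).isPreconnected) hζb hev ha0
      simp only [Pi.zero_apply, sub_eq_zero] at this
      exact hza this.symm
    have hmult : (multOf φ z (ζ:ℂ) : ℕ∞) = hA.order := by
      rw [multOf, dif_pos hA]
      exact ENat.coe_toNat hne
    have hAhζ : AnalyticAt ℂ h (ζ:ℂ) := hAh _ hζb
    have hu : AnalyticAt ℂ (fun w => (1 - (starRingEnd ℂ) z * φ w)⁻¹) (ζ:ℂ) := by
      apply AnalyticAt.inv
      · exact analyticAt_const.sub (analyticAt_const.mul ((hφ.analyticOnNhd isOpen_ball) _ hζb))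
      · exact hdenh _ hζb
    have ho : hAhζ.order = hA.order := by
      apply order_unit_mul hAhζ hu hA (inv_ne_zero (hdenh _ hζb))
      filter_upwards [isOpen_ball.mem_nhds hζb] with w hw
      simp only [hh]
      rw [div_eq_mul_inv, mul_comm]
    exact ⟨hA, h1, hne, hmult, hAhζ, ho⟩
  -- norm of h 0 is at least ρ
  have hρh0 : ρ ≤ ‖h 0‖ := by
    have hkey := pseudo_lower z a hzn (le_of_lt hRα)
    have hnormeq : ‖1 - (starRingEnd ℂ) a * z‖ = ‖1 - (starRingEnd ℂ) z * a‖ := by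
      rw [← RCLike.norm_conj (1 - (starRingEnd ℂ) a * z)]
      congr 1
      simp only [map_sub, map_one, map_mul, Complex.conj_conj, RingHomCompTriple.comp_apply,
        RingHom.id_apply]
      ring
    have hh0 : h 0 = (a - z)/(1 - (starRingEnd ℂ) z * a) := by rw [hh]
    rw [hh0, norm_div, norm_sub_rev]
    have hD0 : 0 < ‖1 - (starRingEnd ℂ) z * a‖ :=
      norm_pos_iff.mpr (mob_denom_ne hzn hα1.le)
    rw [hρdef, div_le_div_iff₀ (by linarith) hD0]
    rw [hnormeq] at hkey
    exact hkey
  -- each fiber point is far from the origin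
  have hsingle : ∀ ζ : ↥T, ρ ≤ ‖(ζ:ℂ)‖ := by
    intro ζ
    obtain ⟨hζb, hφζ⟩ := hfiber ζ
    obtain ⟨hA, h1, hne, hmult, hAhζ, ho⟩ := horder_facts ζ
    have hbl := blaschke_bound (Multiset.replicate 1 ((ζ:ℂ))) h hdh hbh
      (by intro ξ hξ; rw [Multiset.eq_of_mem_replicate hξ]; exact hζb)
      (by
        intro ξ hξ
        have hξe := Multiset.eq_of_mem_replicate hξ
        subst hξe
        refine ⟨hAhζ, ?_⟩
        rw [Multiset.count_replicate_self, ho]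
        exact_mod_cast h1)
    have hpr : ((Multiset.replicate 1 ((ζ:ℂ))).map norm).prod = ‖(ζ:ℂ)‖ := by
      simp
    rw [hpr] at hbl
    exact le_trans hρh0 hbl
  have hζlt1 : ∀ ζ : ↥T, ‖(ζ:ℂ)‖ < 1 := fun ζ => mem_ball_zero_iff.mp (hfiber ζ).1
  -- abbreviation
  set What : ℝ → ℝ := fun t => ∫ s in Set.Ioo t 1, ω s with hWhat
  have hWρ0 : 0 ≤ What ρ := what_nonneg hω_nonneg hρpos.le
  -- the fundamental finite-sum bound
  have key : ∀ F : Finset ↥T,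
      ∑ ζ ∈ F, (multOf φ z (ζ:ℂ) : ℝ) * wstar ω ‖(ζ:ℂ)‖ ≤ M * wstar ω R := by
    intro F
    set S : Multiset ℂ := ∑ ζ ∈ F, Multiset.replicate (multOf φ z (ζ:ℂ)) ((ζ:ℂ)) with hS
    have hSball : ∀ ξ ∈ S, ξ ∈ ball (0:ℂ) 1 := by
      intro ξ hξ
      rw [hS, Multiset.mem_sum] at hξ
      obtain ⟨ζ₀, hζ₀, hmem⟩ := hξ
      rw [Multiset.eq_of_mem_replicate hmem]
      exact (hfiber ζ₀).1
    have hScount : ∀ ξ ∈ S, ∃ hAx : AnalyticAt ℂ h ξ, (S.count ξ : ℕ∞) ≤ hAx.order := by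
      intro ξ hξ
      rw [hS, Multiset.mem_sum] at hξ
      obtain ⟨ζ₀, hζ₀, hmem⟩ := hξ
      have hξe := Multiset.eq_of_mem_replicate hmem
      subst hξe
      obtain ⟨hA, h1, hne, hmult, hAhζ, ho⟩ := horder_facts ζ₀
      refine ⟨hAhζ, ?_⟩
      have hcnt : S.count ((ζ₀:ℂ)) = multOf φ z (ζ₀:ℂ) := by
        rw [hS, Multiset.count_sum']
        rw [Finset.sum_eq_single ζ₀]
        · rw [Multiset.count_replicate_self]
        · intro ζ hζF hζne
          rw [Multiset.count_replicate, if_neg]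
          intro hcon
          exact hζne (Subtype.ext hcon)
        · intro hcon
          exact absurd hζ₀ hcon
      rw [hcnt, ho]
      exact hmult.le
    have hbl := blaschke_bound S h hdh hbh hSball hScount
    rw [hS, prod_map_sum_replicate] at hbl
    set P : ℝ := ∏ ζ ∈ F, ‖(ζ:ℂ)‖ ^ (multOf φ z (ζ:ℂ)) with hP
    have hPρ : ρ ≤ P := le_trans hρh0 hbl
    have hlogP : Real.log P = ∑ ζ ∈ F, (multOf φ z (ζ:ℂ) : ℝ) * Real.log ‖(ζ:ℂ)‖ := by
      rw [hP, Real.log_prod]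
      · refine Finset.sum_congr rfl (fun ζ hζ => ?_)
        rw [Real.log_pow]
      · intro ζ hζ
        exact pow_ne_zero _ (ne_of_gt (lt_of_lt_of_le hρpos (hsingle ζ)))
    have hsum_log : ∑ ζ ∈ F, (multOf φ z (ζ:ℂ) : ℝ) * (-Real.log ‖(ζ:ℂ)‖)
        ≤ -Real.log ρ := by
      have hlp : Real.log ρ ≤ Real.log P := Real.log_le_log hρpos hPρ
      have : ∑ ζ ∈ F, (multOf φ z (ζ:ℂ) : ℝ) * (-Real.log ‖(ζ:ℂ)‖)
          = -Real.log P := by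
        rw [hlogP, ← Finset.sum_neg_distrib]
        exact Finset.sum_congr rfl (fun ζ _ => by ring)
      rw [this]
      linarith
    -- term-wise estimate
    have hterm : ∀ ζ ∈ F, (multOf φ z (ζ:ℂ) : ℝ) * wstar ω ‖(ζ:ℂ)‖
        ≤ 2 * What ρ * ((multOf φ z (ζ:ℂ) : ℝ) * (-Real.log ‖(ζ:ℂ)‖)) := by
      intro ζ hζ
      have hρζ : ρ ≤ ‖(ζ:ℂ)‖ := hsingle ζ
      have hζ1 : ‖(ζ:ℂ)‖ < 1 := hζlt1 ζ
      have hζhalf : (1:ℝ)/2 ≤ ‖(ζ:ℂ)‖ := le_trans hρhalf hρζ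
      have hζpos : 0 < ‖(ζ:ℂ)‖ := lt_of_lt_of_le hρpos hρζ
      have h1 : wstar ω ‖(ζ:ℂ)‖ ≤ 2*(1-‖(ζ:ℂ)‖) * What ‖(ζ:ℂ)‖ :=
        wstar_upper hω_nonneg hω_int hζhalf hζ1
      have h2 : What ‖(ζ:ℂ)‖ ≤ What ρ := what_anti hω_nonneg hω_int hρpos.le hρζ
      have h3 : 1 - ‖(ζ:ℂ)‖ ≤ -Real.log ‖(ζ:ℂ)‖ := by
        have := Real.log_le_sub_one_of_pos hζpos
        linarith
      have h4 : 0 ≤ -Real.log ‖(ζ:ℂ)‖ := by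
        have := Real.log_nonpos (norm_nonneg _) hζ1.le
        linarith
      have h5 : wstar ω ‖(ζ:ℂ)‖ ≤ 2 * What ρ * (-Real.log ‖(ζ:ℂ)‖) := by
        calc wstar ω ‖(ζ:ℂ)‖ ≤ 2*(1-‖(ζ:ℂ)‖) * What ‖(ζ:ℂ)‖ := h1
          _ ≤ 2*(1-‖(ζ:ℂ)‖) * What ρ := by
              apply mul_le_mul_of_nonneg_left h2 (by linarith)
          _ ≤ 2*(-Real.log ‖(ζ:ℂ)‖) * What ρ := by
              apply mul_le_mul_of_nonneg_right (by linarith) hWρ0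
          _ = 2 * What ρ * (-Real.log ‖(ζ:ℂ)‖) := by ring
      calc (multOf φ z (ζ:ℂ) : ℝ) * wstar ω ‖(ζ:ℂ)‖
          ≤ (multOf φ z (ζ:ℂ) : ℝ) * (2 * What ρ * (-Real.log ‖(ζ:ℂ)‖)) :=
            mul_le_mul_of_nonneg_left h5 (by positivity)
        _ = 2 * What ρ * ((multOf φ z (ζ:ℂ) : ℝ) * (-Real.log ‖(ζ:ℂ)‖)) := by ring
    have hsum1 : ∑ ζ ∈ F, (multOf φ z (ζ:ℂ) : ℝ) * wstar ω ‖(ζ:ℂ)‖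
        ≤ 2 * What ρ * (-Real.log ρ) := by
      calc ∑ ζ ∈ F, (multOf φ z (ζ:ℂ) : ℝ) * wstar ω ‖(ζ:ℂ)‖
          ≤ ∑ ζ ∈ F, 2 * What ρ * ((multOf φ z (ζ:ℂ) : ℝ) * (-Real.log ‖(ζ:ℂ)‖)) :=
            Finset.sum_le_sum hterm
        _ = 2 * What ρ * ∑ ζ ∈ F, (multOf φ z (ζ:ℂ) : ℝ) * (-Real.log ‖(ζ:ℂ)‖) := by
            rw [Finset.mul_sum]
        _ ≤ 2 * What ρ * (-Real.log ρ) := by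
            apply mul_le_mul_of_nonneg_left hsum_log (by positivity)
    have hlogρ : -Real.log ρ ≤ 2*(1-ρ) := by
      have hlog := Real.log_le_sub_one_of_pos (inv_pos.mpr hρpos)
      rw [Real.log_inv] at hlog
      have e3 : ρ⁻¹ - 1 = (1-ρ)/ρ := by field_simp
      have h9 : (1-ρ)/ρ ≤ 2*(1-ρ) := by
        rw [div_le_iff₀ hρpos]
        nlinarith
      linarith
    -- passage from ρ to R
    have h1ρK : 1 - ρ ≤ K*(1-R) := by
      have hαRne : (1 - α*R) ≠ 0 := by linarith
      have e : (1-ρ)*(1 - α*R) = (1+α)*(1-R) := by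
        rw [hρdef]
        rw [sub_mul, div_mul_cancel₀ _ hαRne]
        ring
      have e2 : (1-ρ)*(1-α) ≤ 2*(1-R) := by nlinarith
      rw [hK]
      rw [div_mul_eq_mul_div, le_div_iff₀ (by linarith : (0:ℝ) < 1-α)]
      linarith [e2]
    have hKR0 : 0 ≤ 1 - K*(1-R) := by
      have : K*(1-R) ≤ K*(1-(1+α)/2) := by
        apply mul_le_mul_of_nonneg_left (by linarith) hKpos.le
      have hne2 : (1:ℝ)-α ≠ 0 := by linarith
      have h2 : K*(1-(1+α)/2) = 1 := by rw [hK]; field_simp; ring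
      linarith
    have hKR1 : 1 - K*(1-R) < 1 := by nlinarith
    have hWa : What ρ ≤ What (1 - K*(1-R)) :=
      what_anti hω_nonneg hω_int hKR0 (by linarith)
    have hWb : What (1 - K*(1-R)) ≤ C'^n * What (1 - K*(1-R)/2^n) := by
      have := doubling_iter hω_nonneg hdoubling n (1 - K*(1-R)) hKR0 hKR1
      have e : 1 - (1-(1 - K*(1-R)))/2^n = 1 - K*(1-R)/2^n := by ring
      rw [e] at this
      exact this
    have hWc : What (1 - K*(1-R)/2^n) ≤ What R := by
      apply what_anti hω_nonneg hω_int hR0.le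
      have h2 : K*(1-R)/2^n ≤ 1-R := by
        rw [div_le_iff₀ (by positivity : (0:ℝ) < (2:ℝ)^n)]
        nlinarith
      linarith
    have hWρR : What ρ ≤ C'^n * What R := by
      calc What ρ ≤ What (1 - K*(1-R)) := hWa
        _ ≤ C'^n * What (1 - K*(1-R)/2^n) := hWb
        _ ≤ C'^n * What R := by
            apply mul_le_mul_of_nonneg_left hWc (by positivity)
    have hWR2 : (1-R) * What R ≤ 2*C'*wstar ω R := by
      have hd := hdoubling R ⟨hR0.le, hR1⟩
      have hd' : What R ≤ C' * What ((1+R)/2) := by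
        refine le_trans hd ?_
        apply mul_le_mul_of_nonneg_right (le_max_left _ _)
        exact what_nonneg hω_nonneg (by linarith)
      have hl := wstar_lower hω_nonneg hω_int hR0 hR1
      have hmid0 : (0:ℝ) ≤ What ((1+R)/2) := what_nonneg hω_nonneg (by linarith)
      calc (1-R) * What R ≤ (1-R) * (C' * What ((1+R)/2)) :=
            mul_le_mul_of_nonneg_left hd' (by linarith)
        _ = C' * ((1-R) * What ((1+R)/2)) := by ring
        _ ≤ C' * (2 * wstar ω R) := by
            apply mul_le_mul_of_nonneg_left hl hC'0.le
        _ = 2*C'*wstar ω R := by ring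
    -- put everything together
    have hWρ1 : 0 ≤ 1 - ρ := by linarith
    have hWR0 : 0 ≤ What R := what_nonneg hω_nonneg hR0.le
    calc ∑ ζ ∈ F, (multOf φ z (ζ:ℂ) : ℝ) * wstar ω ‖(ζ:ℂ)‖
        ≤ 2 * What ρ * (-Real.log ρ) := hsum1
      _ ≤ 2 * What ρ * (2*(1-ρ)) := by
          apply mul_le_mul_of_nonneg_left hlogρ (by positivity)
      _ = 4 * ((1-ρ) * What ρ) := by ring
      _ ≤ 4 * ((K*(1-R)) * (C'^n * What R)) := by
          apply mul_le_mul_of_nonneg_left ?_ (by norm_num)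
          exact mul_le_mul h1ρK hWρR hWρ0 (mul_nonneg hKpos.le (by linarith))
      _ = 4 * K * C'^n * ((1-R) * What R) := by ring
      _ ≤ 4 * K * C'^n * (2*C'*wstar ω R) := by
          apply mul_le_mul_of_nonneg_left hWR2 (by positivity)
      _ = M * wstar ω R := by rw [hM]; ring
  -- conclude via tsum
  rw [nev]
  by_cases hsumm : Summable (fun ζ : ↥T => (multOf φ z (ζ:ℂ) : ℝ) * wstar ω ‖(ζ:ℂ)‖)
  · exact Summable.tsum_le_of_sum_le hsumm key
  · rw [tsum_eq_zero_of_not_summable hsumm]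
    have hws : 0 ≤ wstar ω R := wstar_nonneg hω_nonneg hR0
    positivity
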